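/- arXiv:1512.01697 — 4 statements merged into one kernel-verified Lean document; each statement's English description precedes it below -/
import Mathlib

section
/- Let s be a finite-dimensional semisimple Lie algebra over ℂ that is the direct sum of m ≥ 1 simple ideals s₀ ⊕ s₁ ⊕ ⋯ ⊕ s_{m−1}, and let α be an automorphism of s satisfying α(s_j) = s_{j+1} (indices mod m). Then α has at least m distinct eigenvalues. -/
/-- Let `s` be a finite-dimensional semisimple Lie algebra over `ℂ` that is the internal
direct sum of `m ≥ 1` simple ideals `s₀ ⊕ s₁ ⊕ ⋯ ⊕ s_{m-1}`, and let `α` be an automorphism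
of `s` satisfying `α(s_j) = s_{j+1}` (indices mod `m`). Then `α` has at least `m` distinct
eigenvalues. -/
theorem eig_ge_of_cyclic_permutation_of_simple_ideals
    (s : Type*) [LieRing s] [LieAlgebra ℂ s] [FiniteDimensional ℂ s]
    (m : ℕ) (hm : 1 ≤ m) (I : ZMod m → LieIdeal ℂ s)
    (hsimple : ∀ j, LieAlgebra.IsSimple ℂ ↥(I j))
    (hinternal : DirectSum.IsInternal fun j => (I j).toSubmodule)
    (α : s ≃ₗ⁅ℂ⁆ s)
    (hperm : ∀ j, ((I j).toSubmodule).map (α.toLinearEquiv : s →ₗ[ℂ] s) = (I (j + 1)).toSubmodule) :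
    m ≤ {μ : ℂ | Module.End.HasEigenvalue (α.toLinearEquiv : s →ₗ[ℂ] s) μ}.ncard := by
  classical
  set A : s →ₗ[ℂ] s := (α.toLinearEquiv : s →ₗ[ℂ] s) with hA
  -- iterated permutation
  have hpow : ∀ (k : ℕ) (j : ZMod m),
      ((I j).toSubmodule).map (A ^ k) = (I (j + k)).toSubmodule := by
    intro k
    induction k with
    | zero =>
      intro j
      simp [Module.End.one_eq_id, Submodule.map_id]
    | succ k ih =>
      intro j
      rw [pow_succ, Module.End.mul_eq_comp, Submodule.map_comp, hperm j, ih (j + 1)]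
      congr 1
      push_cast
      ring_nf
  -- A^m maps I 0 to itself
  have hAm : ((I 0).toSubmodule).map (A ^ m) = (I 0).toSubmodule := by
    rw [hpow m 0, ZMod.natCast_self, add_zero]
  have hmem : ∀ x ∈ (I 0).toSubmodule, (A ^ m) x ∈ (I 0).toSubmodule := by
    intro x hx
    rw [← hAm]
    exact Submodule.mem_map_of_mem hx
  -- I 0 is nontrivial
  have hnt : Nontrivial ↥(I 0) := by
    by_contra h
    rw [not_nontrivial_iff_subsingleton] at h
    exact (hsimple 0).non_abelian ⟨fun x y => Subsingleton.elim _ _⟩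
  -- eigenvector of restricted A^m
  set B : Module.End ℂ ↥(I 0).toSubmodule := (A ^ m).restrict hmem with hB
  obtain ⟨lam, hlam⟩ := Module.End.exists_eigenvalue B
  obtain ⟨v, hv⟩ := hlam.exists_hasEigenvector
  have hv0 : (v : s) ≠ 0 := fun h => hv.2 (Subtype.ext h)
  have hAmv : (A ^ m) (v : s) = lam • (v : s) := by
    have h1 := hv.apply_eq_smul
    have h2 : ((B v : ↥(I 0).toSubmodule) : s) = (A ^ m) (v : s) := rfl
    rw [← h2, h1, Submodule.coe_smul]
  -- lam ≠ 0
  have hlam0 : lam ≠ 0 := by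
    intro h
    apply hv0
    have hinj : Function.Injective (A ^ m) := by
      rw [Module.End.coe_pow]
      exact Function.Injective.iterate α.toLinearEquiv.injective m
    apply hinj
    rw [hAmv, h, zero_smul, map_zero]
  -- projection onto I 0
  set e := LinearEquiv.ofBijective
    (DirectSum.coeLinearMap fun j => (I j).toSubmodule) hinternal with he
  set π : s →ₗ[ℂ] ↥(I 0).toSubmodule :=
    (DirectSum.component ℂ (ZMod m) (fun j => ↥(I j).toSubmodule) 0).comp
      e.symm.toLinearMap with hπ
  have hπ_apply : ∀ x : s, π x = (e.symm x) 0 := fun x => rfl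
  -- main claim: every m-th root of lam is an eigenvalue of A
  have key : ∀ μ : ℂ, μ ^ m = lam → Module.End.HasEigenvalue A μ := by
    intro μ hμ
    have hμ0 : μ ≠ 0 := by
      intro h; apply hlam0; rw [← hμ, h, zero_pow (by omega)]
    set w : s := ∑ k ∈ Finset.range m, μ ^ (m - (k + 1)) • (A ^ k) (v : s) with hw
    have hw0 : w ≠ 0 := by
      intro h
      have hcomp : π w = μ ^ (m - 1) • v := by
        rw [hw, map_sum]
        rw [Finset.sum_eq_single 0]
        · rw [map_smul, hπ_apply, pow_zero, Module.End.one_apply,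
            hinternal.ofBijective_coeLinearMap_of_mem v.2]
        · intro k hk hk0
          have hkm : k < m := Finset.mem_range.mp hk
          have hmem' : (A ^ k) (v : s) ∈ (I (k : ZMod m)).toSubmodule := by
            have h3 := hpow k 0
            rw [zero_add] at h3
            rw [← h3]
            exact Submodule.mem_map_of_mem v.2
          have hne : ((k : ZMod m)) ≠ 0 := by
            intro hc
            rw [ZMod.natCast_eq_zero_iff] at hc
            exact absurd (Nat.le_of_dvd (Nat.pos_of_ne_zero hk0) hc) (by omega)
          rw [map_smul, hπ_apply,
            hinternal.ofBijective_coeLinearMap_of_mem_ne hne hmem']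
          simp
        · intro h0; exact absurd (Finset.mem_range.mpr (by omega)) h0
      rw [h, map_zero] at hcomp
      rcases smul_eq_zero.mp hcomp.symm with h1 | h1
      · exact pow_ne_zero _ hμ0 h1
      · exact hv.2 h1
    have hAw : A w = μ • w := by
      set F : ℕ → s := fun k => μ ^ (m - k) • (A ^ k) (v : s) with hF
      have h1 : A w = ∑ k ∈ Finset.range m, F (k + 1) := by
        rw [hw, map_sum]
        refine Finset.sum_congr rfl fun k _ => ?_
        rw [map_smul]
        congr 1
        rw [pow_succ', Module.End.mul_apply]
      have h2 : μ • w = ∑ k ∈ Finset.range m, F k := by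
        rw [hw, Finset.smul_sum]
        refine Finset.sum_congr rfl fun k hk => ?_
        have hkm : k < m := Finset.mem_range.mp hk
        rw [hF, smul_smul, ← pow_succ']
        congr 2
        omega
      have hFm : F m = F 0 := by
        rw [hF]
        simp only [Nat.sub_self, pow_zero, one_smul, Nat.sub_zero]
        rw [hAmv, ← hμ]
        simp
      have hsum : ∑ k ∈ Finset.range m, (F (k + 1) - F k) = 0 := by
        rw [Finset.sum_range_sub F m, hFm, sub_self]
      rw [Finset.sum_sub_distrib] at hsum
      rw [h1, h2]
      exact sub_eq_zero.mp hsum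
    exact Module.End.hasEigenvalue_of_hasEigenvector
      ⟨Module.End.mem_eigenspace_iff.mpr hAw, hw0⟩
  -- counting: lam has m distinct m-th roots in ℂ
  have hfin : {μ : ℂ | Module.End.HasEigenvalue A μ}.Finite := by
    have hmp : minpoly ℂ A ≠ 0 := minpoly.ne_zero (Algebra.IsIntegral.isIntegral (R := ℂ) A)
    refine Set.Finite.subset (Polynomial.finite_setOf_isRoot hmp) ?_
    intro μ hμ
    exact Module.End.hasEigenvalue_iff_isRoot.mp hμ
  obtain ⟨μ₀, hμ₀⟩ := IsAlgClosed.exists_pow_nat_eq lam (n := m) (by omega)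
  have hμ₀0 : μ₀ ≠ 0 := by
    intro h; apply hlam0; rw [← hμ₀, h, zero_pow (by omega)]
  have hζ := Complex.isPrimitiveRoot_exp m (by omega)
  set ζ : ℂ := Complex.exp (2 * Real.pi * Complex.I / m) with hζdef
  set f : Fin m → ℂ := fun k => μ₀ * ζ ^ (k : ℕ) with hf
  have hfinj : Function.Injective f := by
    intro a b hab
    have h1 : ζ ^ (a : ℕ) = ζ ^ (b : ℕ) := mul_left_cancel₀ hμ₀0 hab
    exact Fin.ext (hζ.pow_inj a.2 b.2 h1)
  have hsub : ↑(Finset.image f Finset.univ) ⊆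
      {μ : ℂ | Module.End.HasEigenvalue A μ} := by
    intro μ hμ
    obtain ⟨k, _, rfl⟩ := Finset.mem_image.mp hμ
    apply key
    rw [hf]
    simp only
    rw [mul_pow, ← pow_mul, mul_comm (k : ℕ) m, pow_mul, hζ.pow_eq_one, one_pow, mul_one, hμ₀]
  calc m = (Finset.image f Finset.univ).card := by
        rw [Finset.card_image_of_injective _ hfinj, Finset.card_univ, Fintype.card_fin]
    _ = (↑(Finset.image f Finset.univ) : Set ℂ).ncard := (Set.ncard_coe_finset _).symm
    _ ≤ _ := Set.ncard_le_ncard hsub hfin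
end

section
/- Let s be a finite-dimensional semisimple Lie algebra over ℂ that is the direct sum of m ≥ 1 simple ideals s₀ ⊕ s₁ ⊕ ⋯ ⊕ s_{m−1}, and let α be an automorphism of s satisfying α(s_j) = s_{j+1} (indices mod m). Let π₀ : s → s₀ and ι₀ : s₀ → s be the projection and inclusion associated with the direct sum decomposition, and let α₀ = π₀ ∘ α^m ∘ ι₀, an automorphism of s₀. Then the fixed-point space of α on s and the fixed-point space of α₀ on s₀ have the same dimension: fix(α) = fix(α₀). -/
/-- Let `s` be a finite-dimensional semisimple Lie algebra over `ℂ` that is the internal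
direct sum of `m ≥ 1` simple ideals `s₀ ⊕ s₁ ⊕ ⋯ ⊕ s_{m-1}`, let `α` be an automorphism of
`s` satisfying `α(s_j) = s_{j+1}` (indices mod `m`), let `π₀ : s → s₀` be the projection
associated with the direct sum decomposition (it restricts to the identity on `s₀` and
vanishes on the other summands), let `ι₀ : s₀ → s` be the inclusion, and set
`α₀ = π₀ ∘ α^m ∘ ι₀`. Then the fixed-point space of `α` on `s` and the fixed-point space of
`α₀` on `s₀` have the same dimension. -/
theorem fix_eq_fix_of_cyclic_permutation_of_simple_ideals
    (s : Type*) [LieRing s] [LieAlgebra ℂ s] [FiniteDimensional ℂ s]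
    (m : ℕ) (hm : 1 ≤ m) (I : ZMod m → LieIdeal ℂ s)
    (hsimple : ∀ j, LieAlgebra.IsSimple ℂ ↥(I j))
    (hinternal : DirectSum.IsInternal fun j => (I j).toSubmodule)
    (α : s ≃ₗ⁅ℂ⁆ s)
    (hperm : ∀ j, ((I j).toSubmodule).map (α.toLinearEquiv : s →ₗ[ℂ] s) = (I (j + 1)).toSubmodule)
    (π₀ : s →ₗ[ℂ] ↥(I 0))
    (hproj : ∀ x : ↥(I 0), π₀ ↑x = x)
    (hker : ∀ j : ZMod m, j ≠ 0 → ∀ x ∈ I j, π₀ x = 0) :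
    Module.finrank ℂ ↥(Module.End.eigenspace (α.toLinearEquiv : s →ₗ[ℂ] s) 1)
      = Module.finrank ℂ ↥(Module.End.eigenspace
          (π₀ ∘ₗ ((α.toLinearEquiv : s →ₗ[ℂ] s) ^ m) ∘ₗ (I 0).toSubmodule.subtype) 1) := by
  haveI : NeZero m := ⟨by omega⟩
  set A : s →ₗ[ℂ] s := (α.toLinearEquiv : s →ₗ[ℂ] s) with hA
  set B : s →ₗ[ℂ] s := (α.symm.toLinearEquiv : s →ₗ[ℂ] s) with hB
  set α₀ : ↥(I 0) →ₗ[ℂ] ↥(I 0) := π₀ ∘ₗ (A ^ m) ∘ₗ (I 0).toSubmodule.subtype with hα₀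
  have hBA : ∀ x, B (A x) = x := fun x => α.symm_apply_apply x
  have hAB : ∀ x, A (B x) = x := fun x => α.apply_symm_apply x
  have hBAk : ∀ (k : ℕ) (x : s), (B ^ k) ((A ^ k) x) = x := by
    intro k
    induction k with
    | zero => simp
    | succ n ih =>
      intro x
      rw [pow_succ A, pow_succ' B, Module.End.mul_apply, Module.End.mul_apply, ih, hBA]
  have hABk : ∀ (k : ℕ) (z : s), (A ^ k) ((B ^ k) z) = z := by
    intro k
    induction k with
    | zero => simp
    | succ n ih =>
      intro z
      rw [pow_succ' A, pow_succ B, Module.End.mul_apply, Module.End.mul_apply, ih, hAB]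
  -- image of the ideals under powers of A
  have hmap : ∀ (k : ℕ) (j : ZMod m),
      Submodule.map (A ^ k) (I j).toSubmodule = (I (j + (k : ZMod m))).toSubmodule := by
    intro k
    induction k with
    | zero => intro j; rw [pow_zero, Module.End.one_eq_id, Submodule.map_id, Nat.cast_zero, add_zero]
    | succ n ih =>
      intro j
      have hc : ((j + ((n : ℕ) : ZMod m)) + 1) = j + (((n + 1 : ℕ)) : ZMod m) := by
        push_cast; ring
      rw [pow_succ' A, Module.End.mul_eq_comp, Submodule.map_comp, ih, hperm, hc]
  have hmemA : ∀ (k : ℕ) (j : ZMod m) (x : s), x ∈ (I j).toSubmodule →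
      (A ^ k) x ∈ (I (j + (k : ZMod m))).toSubmodule := by
    intro k j x hx
    rw [← hmap k j]
    exact Submodule.mem_map_of_mem hx
  have hmemB : ∀ (k : ℕ) (j : ZMod m) (x : s), x ∈ (I j).toSubmodule →
      (B ^ k) x ∈ (I (j - (k : ZMod m))).toSubmodule := by
    intro k j x hx
    have hx' : x ∈ Submodule.map (A ^ k) (I (j - (k : ZMod m))).toSubmodule := by
      rw [hmap]; simpa using hx
    obtain ⟨z, hz, rfl⟩ := hx'
    rw [hBAk]; exact hz
  -- π₀ of a sum ∑ A^k y for y ∈ I 0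
  have hsum_proj : ∀ y : ↥(I 0), π₀ (∑ k ∈ Finset.range m, (A ^ k) (y : s)) = y := by
    intro y
    rw [map_sum, Finset.sum_eq_single_of_mem 0 (Finset.mem_range.mpr (by omega))]
    · simpa using hproj y
    · intro k hk hk0
      apply hker ((k : ℕ) : ZMod m)
      · intro h
        apply hk0
        have hv := ZMod.val_cast_of_lt (Finset.mem_range.mp hk)
        rw [h, ZMod.val_zero] at hv
        omega
      · have := hmemA k 0 (y : s) y.2
        rwa [zero_add] at this
  -- if α₀ y = y then A^m extends y
  have hfix0 : ∀ y : ↥(I 0), α₀ y = y → (A ^ m) (y : s) = (y : s) := by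
    intro y hy
    have h0 : (A ^ m) (y : s) ∈ (I 0).toSubmodule := by
      have := hmemA m 0 (y : s) y.2
      rwa [zero_add, ZMod.natCast_self] at this
    have h1 : (π₀ ((A ^ m) (y : s)) : s) = (A ^ m) (y : s) :=
      congrArg Subtype.val (hproj ⟨(A ^ m) (y : s), h0⟩)
    have h2 : π₀ ((A ^ m) (y : s)) = y := hy
    rw [← h1, h2]
  -- the key resolution-of-identity
  have hPid : ∀ x : s,
      ∑ k ∈ Finset.range m, (A ^ k) ((π₀ ((B ^ k) x) : s)) = x := by
    intro x
    have hxtop : x ∈ ⨆ j, (I j).toSubmodule := by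
      rw [hinternal.submodule_iSup_eq_top]; trivial
    refine Submodule.iSup_induction (fun j => (I j).toSubmodule)
      (motive := fun x => ∑ k ∈ Finset.range m, (A ^ k) ((π₀ ((B ^ k) x) : s)) = x)
      hxtop ?_ (by simp) ?_
    · intro j x hx
      rw [Finset.sum_eq_single_of_mem j.val (Finset.mem_range.mpr (ZMod.val_lt j))]
      · have h0 : (B ^ j.val) x ∈ (I 0).toSubmodule := by
          have := hmemB j.val j x hx
          rwa [ZMod.natCast_rightInverse j, sub_self] at this
        have heq : (π₀ ((B ^ j.val) x) : s) = (B ^ j.val) x :=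
          congrArg Subtype.val (hproj ⟨(B ^ j.val) x, h0⟩)
        rw [heq, hABk]
      · intro k hk hkj
        have hne : j - ((k : ℕ) : ZMod m) ≠ 0 := by
          intro h
          apply hkj
          have h' : ((k : ℕ) : ZMod m) = j := (sub_eq_zero.mp h).symm
          rw [← h', ZMod.val_cast_of_lt (Finset.mem_range.mp hk)]
        rw [hker _ hne _ (hmemB k j x hx)]
        simp
    · intro a b ha hb
      simp only [map_add, LieSubmodule.coe_add]
      rw [Finset.sum_add_distrib, ha, hb]
  -- the two fixed spaces
  set F := Module.End.eigenspace A 1 with hF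
  set F₀ := Module.End.eigenspace α₀ 1 with hF₀
  have hmemF : ∀ x : s, x ∈ F ↔ A x = x := by
    intro x
    rw [hF, Module.End.mem_eigenspace_iff, one_smul]
  have hmemF₀ : ∀ y : ↥(I 0), y ∈ F₀ ↔ α₀ y = y := by
    intro y
    rw [hF₀, Module.End.mem_eigenspace_iff, one_smul]
  have hAk_fix : ∀ (k : ℕ) (x : s), A x = x → (A ^ k) x = x := by
    intro k x hx
    induction k with
    | zero => simp
    | succ n ih => rw [pow_succ, Module.End.mul_apply, hx, ih]
  have hBk_fix : ∀ (k : ℕ) (x : s), A x = x → (B ^ k) x = x := by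
    intro k x hx
    induction k with
    | zero => simp
    | succ n ih =>
      rw [pow_succ', Module.End.mul_apply, ih]
      calc B x = B (A x) := by rw [hx]
        _ = x := hBA x
  -- fixed vectors are sums ∑ A^k (π₀ x)
  have hfix_eq : ∀ x : s, A x = x →
      ∑ k ∈ Finset.range m, (A ^ k) ((π₀ x : s)) = x := by
    intro x hx
    have := hPid x
    calc ∑ k ∈ Finset.range m, (A ^ k) ((π₀ x : s))
        = ∑ k ∈ Finset.range m, (A ^ k) ((π₀ ((B ^ k) x) : s)) := by
          refine Finset.sum_congr rfl fun k _ => ?_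
          rw [hBk_fix k x hx]
      _ = x := hPid x
  -- π₀ maps F into F₀
  have hΦmem : ∀ x : s, A x = x → α₀ (π₀ x) = π₀ x := by
    intro x hx
    have h1 : (A ^ m) x = x := hAk_fix m x hx
    have h2 : x = ∑ k ∈ Finset.range m, (A ^ k) ((π₀ x : s)) := (hfix_eq x hx).symm
    -- A^m (π₀ x) lands in I 0 and equals the coercion of α₀ (π₀ x)
    have h0 : (A ^ m) ((π₀ x : s)) ∈ (I 0).toSubmodule := by
      have := hmemA m 0 _ (π₀ x).2
      rwa [zero_add, ZMod.natCast_self] at this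
    have hcoe : (A ^ m) ((π₀ x : s)) = ((α₀ (π₀ x) : ↥(I 0)) : s) :=
      (congrArg Subtype.val (hproj ⟨(A ^ m) ((π₀ x : s)), h0⟩)).symm
    have h3 : (A ^ m) x = ∑ k ∈ Finset.range m, (A ^ k) (((α₀ (π₀ x)) : s)) := by
      conv_lhs => rw [h2]
      rw [map_sum]
      refine Finset.sum_congr rfl fun k _ => ?_
      rw [← hcoe, ← Module.End.mul_apply, ← Module.End.mul_apply, ← pow_add, ← pow_add,
        Nat.add_comm m k]
    have h4 : π₀ ((A ^ m) x) = α₀ (π₀ x) := by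
      rw [h3]
      exact hsum_proj (α₀ (π₀ x))
    rw [← h4, h1]
  -- ∑ A^k maps F₀ into F
  have hΨmem : ∀ y : ↥(I 0), α₀ y = y →
      A (∑ k ∈ Finset.range m, (A ^ k) (y : s)) = ∑ k ∈ Finset.range m, (A ^ k) (y : s) := by
    intro y hy
    have key : ∀ k : ℕ, A ((A ^ k) (y : s)) = (A ^ (k + 1)) (y : s) := by
      intro k
      rw [pow_succ', Module.End.mul_apply]
    rw [map_sum]
    simp only [key]
    have h1 : ∑ k ∈ Finset.range m, (A ^ (k + 1)) (y : s) + (A ^ 0) (y : s)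
        = ∑ k ∈ Finset.range m, (A ^ k) (y : s) + (A ^ m) (y : s) :=
      (Finset.sum_range_succ' (fun k => (A ^ k) (y : s)) m).symm.trans
        (Finset.sum_range_succ (fun k => (A ^ k) (y : s)) m)
    have h2 : (A ^ m) (y : s) = (A ^ 0) (y : s) := by
      rw [hfix0 y hy, pow_zero, Module.End.one_apply]
    rw [h2] at h1
    exact add_right_cancel h1
  -- build the linear equivalence F ≃ F₀
  let Φ : ↥F →ₗ[ℂ] ↥F₀ :=
    LinearMap.codRestrict F₀ (π₀ ∘ₗ F.subtype)
      (fun x => (hmemF₀ _).mpr (hΦmem (x : s) ((hmemF _).mp x.2)))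
  let Ψ' : ↥(I 0) →ₗ[ℂ] s := ∑ k ∈ Finset.range m, (A ^ k) ∘ₗ (I 0).toSubmodule.subtype
  have hΨ'apply : ∀ y : ↥(I 0), Ψ' y = ∑ k ∈ Finset.range m, (A ^ k) (y : s) := by
    intro y
    simp only [Ψ', LinearMap.sum_apply, LinearMap.comp_apply, Submodule.subtype_apply]
    rfl
  let Ψ : ↥F₀ →ₗ[ℂ] ↥F :=
    LinearMap.codRestrict F (Ψ' ∘ₗ F₀.subtype)
      (fun y => by
        apply (hmemF _).mpr
        simp only [LinearMap.comp_apply, Submodule.subtype_apply, hΨ'apply]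
        exact hΨmem (y : ↥(I 0)) ((hmemF₀ _).mp y.2))
  have hΦΨ : ∀ y : ↥F₀, Φ (Ψ y) = y := by
    intro y
    apply Subtype.ext
    show π₀ ((Ψ y : s)) = (y : ↥(I 0))
    show π₀ (Ψ' (y : ↥(I 0))) = (y : ↥(I 0))
    rw [hΨ'apply]
    exact hsum_proj _
  have hΨΦ : ∀ x : ↥F, Ψ (Φ x) = x := by
    intro x
    apply Subtype.ext
    show Ψ' (π₀ (x : s)) = (x : s)
    rw [hΨ'apply]
    exact hfix_eq (x : s) ((hmemF _).mp x.2)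
  have e : ↥F ≃ₗ[ℂ] ↥F₀ :=
    { toFun := Φ
      invFun := Ψ
      map_add' := Φ.map_add
      map_smul' := Φ.map_smul
      left_inv := hΨΦ
      right_inv := hΦΨ }
  exact e.finrank_eq
end

section
/- Let s be a finite-dimensional Lie algebra over ℂ that is the direct sum of m ≥ 1 simple ideals s₀ ⊕ s₁ ⊕ ⋯ ⊕ s_{m−1}, let α be an automorphism of s satisfying α(s_j) = s_{j+1} (indices mod m), and let π_j : s → s_j denote the projections. Suppose v ∈ s is a nonzero eigenvector of α with eigenvalue λ ≠ 0. Then every component π_j(v) is nonzero, the components π₀(v), …, π_{m−1}(v) are linearly independent, their span V is an α-stable subspace of s, and the eigenvalues of the restriction of α to V are exactly the m distinct numbers ω·λ where ω ranges over the m-th roots of unity. -/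
/-- Let `s` be a finite-dimensional Lie algebra over `ℂ` that is the internal direct sum of
`m ≥ 1` simple ideals `s₀ ⊕ s₁ ⊕ ⋯ ⊕ s_{m-1}`, let `α` be an automorphism of `s` with
`α(s_j) = s_{j+1}` (indices mod `m`), and let `π_j : s → s` denote the projections onto the
summands. Suppose `v ∈ s` is a nonzero eigenvector of `α` with eigenvalue `λ ≠ 0`. Then every
component `π_j v` is nonzero, the components are linearly independent, their span `V` is an
`α`-stable subspace of `s`, and the eigenvalues of the restriction of `α` to `V` are exactly
the `m` distinct numbers `ω * λ` where `ω` ranges over the `m`-th roots of unity. -/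
theorem components_of_eigenvector_of_cyclic_permutation
    (s : Type*) [LieRing s] [LieAlgebra ℂ s] [FiniteDimensional ℂ s]
    (m : ℕ) (hm : 1 ≤ m) (I : ZMod m → LieIdeal ℂ s)
    (hsimple : ∀ j, LieAlgebra.IsSimple ℂ ↥(I j))
    (hinternal : DirectSum.IsInternal fun j => (I j).toSubmodule)
    (α : s ≃ₗ⁅ℂ⁆ s)
    (hperm : ∀ j, ((I j).toSubmodule).map (α.toLinearEquiv : s →ₗ[ℂ] s) = (I (j + 1)).toSubmodule)
    (π : ZMod m → (s →ₗ[ℂ] s))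
    (hmem : ∀ j x, π j x ∈ I j)
    (hid : ∀ j, ∀ x ∈ I j, π j x = x)
    (hzero : ∀ j k, j ≠ k → ∀ x ∈ I k, π j x = 0)
    (v : s) (hv : v ≠ 0) (lam : ℂ) (hlam : lam ≠ 0)
    (heigen : α v = lam • v) :
    (∀ j, π j v ≠ 0) ∧
    LinearIndependent ℂ (fun j => π j v) ∧
    (Submodule.span ℂ (Set.range fun j => π j v)).map (α.toLinearEquiv : s →ₗ[ℂ] s)
        = Submodule.span ℂ (Set.range fun j => π j v) ∧
    ∀ hV : ∀ x ∈ Submodule.span ℂ (Set.range fun j => π j v),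
        (α.toLinearEquiv : s →ₗ[ℂ] s) x ∈ Submodule.span ℂ (Set.range fun j => π j v),
      {μ : ℂ | Module.End.HasEigenvalue
            ((α.toLinearEquiv : s →ₗ[ℂ] s).restrict hV) μ}
          = {μ : ℂ | ∃ ω : ℂ, ω ^ m = 1 ∧ μ = ω * lam} ∧
      {μ : ℂ | Module.End.HasEigenvalue
            ((α.toLinearEquiv : s →ₗ[ℂ] s).restrict hV) μ}.ncard = m := by
  haveI : NeZero m := ⟨by omega⟩
  set A : s →ₗ[ℂ] s := (α.toLinearEquiv : s →ₗ[ℂ] s) with hAdef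
  set w : ZMod m → s := fun j => π j v with hwdef
  have hwI : ∀ j, w j ∈ I j := fun j => hmem j v
  -- decomposition of v
  obtain ⟨f, hf, hfsum⟩ := (Submodule.mem_iSup_iff_exists_finsupp
      (fun j => (I j).toSubmodule) v).mp
    (by rw [hinternal.submodule_iSup_eq_top]; trivial)
  have hπv : ∀ k, π k v = f k := by
    intro k
    rw [← hfsum, Finsupp.sum, map_sum]
    rw [Finset.sum_eq_single k (fun b _ hb => hzero k b (Ne.symm hb) _ (hf b))
      (fun hk => by rw [Finsupp.notMem_support_iff.mp hk, map_zero])]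
    exact hid k _ (hf k)
  have hsum : ∑ j, w j = v := by
    rw [← hfsum, Finsupp.sum_fintype _ _ (fun i => rfl)]
    exact Finset.sum_congr rfl fun j _ => hπv j
  -- key relation : A (w j) = lam • w (j+1)
  have hAv : A v = lam • v := heigen
  have hαw : ∀ j, A (w j) = lam • w (j + 1) := by
    intro j
    have hmemα : ∀ k, A (w k) ∈ I (k + 1) := fun k => by
      have h : A (w k) ∈ ((I (k + 1)).toSubmodule) := by
        rw [← hperm k]; exact Submodule.mem_map_of_mem (hwI k)
      exact h
    have h1 : π (j + 1) (A v) = A (w j) := by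
      have hsplit : A v = ∑ k, A (w k) := by rw [← map_sum, hsum]
      rw [hsplit, map_sum]
      rw [Finset.sum_eq_single j
        (fun b _ hb => hzero (j + 1) (b + 1) (fun h => hb (by
          have := add_right_cancel h; exact this.symm ▸ rfl)) _ (hmemα b))
        (fun hj => absurd (Finset.mem_univ j) hj)]
      exact hid (j + 1) _ (hmemα j)
    have h2 : π (j + 1) (A v) = lam • w (j + 1) := by
      rw [hAv, map_smul]
    rw [← h1, h2]
  -- all components nonzero
  have hex : ∃ j, w j ≠ 0 := by
    by_contra h
    push_neg at h
    apply hv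
    rw [← hsum]
    simp [h]
  have hstep : ∀ j, w j ≠ 0 → w (j + 1) ≠ 0 := by
    intro j hj h0
    apply hj
    have h := hαw j
    rw [h0, smul_zero] at h
    have hinjA : Function.Injective A := α.toLinearEquiv.injective
    exact hinjA (by rw [h, map_zero])
  obtain ⟨j0, hj0⟩ := hex
  have hwne : ∀ j, w j ≠ 0 := by
    have key : ∀ n : ℕ, w (j0 + (n : ZMod m)) ≠ 0 := by
      intro n
      induction n with
      | zero => simpa using hj0
      | succ n ih =>
          have : (((n : ℕ) + 1 : ℕ) : ZMod m) = (n : ZMod m) + 1 := by push_cast; ring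
          rw [this, ← add_assoc]
          exact hstep _ ih
    intro j
    have hj : j = j0 + (((j - j0).val : ℕ) : ZMod m) := by
      rw [ZMod.natCast_val, ZMod.cast_id]; ring
    rw [hj]; exact key _
  -- projections of components
  have hπw : ∀ k j, π k (w j) = if k = j then w j else 0 := by
    intro k j
    by_cases h : k = j
    · subst h; rw [if_pos rfl]; exact hid k _ (hwI k)
    · rw [if_neg h]; exact hzero k j h _ (hwI j)
  -- linear independence
  have hli : LinearIndependent ℂ w := by
    rw [Fintype.linearIndependent_iff]
    intro g hg k
    have h := congrArg (π k) hg
    rw [map_sum, map_zero] at h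
    simp only [map_smul, hπw, smul_ite, smul_zero] at h
    rw [Finset.sum_ite_eq (Finset.univ : Finset (ZMod m)) k (fun j => g j • w j)] at h
    simp only [Finset.mem_univ, if_true] at h
    rcases smul_eq_zero.mp h with h' | h'
    · exact h'
    · exact absurd h' (hwne k)
  -- uniqueness of coefficients
  have huniq : ∀ c d : ZMod m → ℂ, ∑ j, c j • w j = ∑ j, d j • w j → ∀ j, c j = d j := by
    intro c d h j
    have h0 : ∑ j, (c j - d j) • w j = 0 := by
      simp only [sub_smul, Finset.sum_sub_distrib, h, sub_self]
    have := Fintype.linearIndependent_iff.mp hli _ h0 j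
    exact sub_eq_zero.mp this
  -- sum reindexing
  have hshift : ∀ g : ZMod m → s, ∑ j, g (j + 1) = ∑ j, g j :=
    fun g => Fintype.sum_equiv (Equiv.addRight 1) _ g (fun x => rfl)
  -- action on coefficient sums
  have hAsum : ∀ c : ZMod m → ℂ, A (∑ j, c j • w j) = ∑ j, (lam * c (j - 1)) • w j := by
    intro c
    rw [map_sum]
    have h1 : ∀ j, A (c j • w j) = (lam * c j) • w (j + 1) := by
      intro j
      rw [map_smul, hαw j, smul_smul, mul_comm]
    rw [Finset.sum_congr rfl (fun j _ => h1 j)]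
    calc ∑ j, (lam * c j) • w (j + 1)
        = ∑ j, (lam * c ((j + 1) - 1)) • w (j + 1) := by
          apply Finset.sum_congr rfl; intro j _; congr 2; ring
      _ = ∑ j, (lam * c (j - 1)) • w j := hshift (fun j => (lam * c (j - 1)) • w j)
  -- span stability
  have hVstab : (Submodule.span ℂ (Set.range w)).map A = Submodule.span ℂ (Set.range w) := by
    rw [Submodule.map_span, ← Set.range_comp]
    apply le_antisymm
    · rw [Submodule.span_le]
      rintro _ ⟨j, rfl⟩
      show A (w j) ∈ _
      rw [hαw j]
      exact Submodule.smul_mem _ lam (Submodule.subset_span ⟨j + 1, rfl⟩)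
    · rw [Submodule.span_le]
      rintro _ ⟨j, rfl⟩
      have : w j = lam⁻¹ • A (w (j - 1)) := by
        rw [hαw (j - 1), smul_smul, inv_mul_cancel₀ hlam, one_smul]
        congr 1; ring
      rw [this]
      exact Submodule.smul_mem _ _ (Submodule.subset_span ⟨j - 1, rfl⟩)
  refine ⟨hwne, hli, hVstab, ?_⟩
  intro hV
  set V := Submodule.span ℂ (Set.range fun j => π j v) with hVdef
  have hrestr_coe : ∀ x : V, ((A.restrict hV x : V) : s) = A (x : s) :=
    fun x => LinearMap.restrict_coe_apply A hV x
  -- the set equality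
  have hset : {μ : ℂ | Module.End.HasEigenvalue (A.restrict hV) μ}
      = {μ : ℂ | ∃ ω : ℂ, ω ^ m = 1 ∧ μ = ω * lam} := by
    ext μ
    simp only [Set.mem_setOf_eq]
    constructor
    · intro hμ
      obtain ⟨x, hx⟩ := hμ.exists_hasEigenvector
      have hx0 : (x : s) ≠ 0 := fun h => hx.2 (by exact_mod_cast ZeroMemClass.coe_eq_zero.mp h)
      obtain ⟨c, hc⟩ := (Submodule.mem_span_range_iff_exists_fun ℂ).mp x.2
      have heq : A (x : s) = μ • (x : s) := by
        have := congrArg (fun y : V => (y : s)) hx.apply_eq_smul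
        simpa [hrestr_coe] using this
      have hcoeff : ∀ j, lam * c (j - 1) = μ * c j := by
        apply huniq
        rw [← hAsum c, hc]
        rw [heq, ← hc, Finset.smul_sum]
        apply Finset.sum_congr rfl
        intro j _
        rw [smul_smul]
      have hck : ∃ k, c k ≠ 0 := by
        by_contra h
        push_neg at h
        apply hx0
        rw [← hc]
        simp [h]
      obtain ⟨k0, hk0⟩ := hck
      have hμ0 : μ ≠ 0 := by
        intro h
        apply hk0
        have := hcoeff (k0 + 1)
        rw [h, zero_mul] at this
        have h1 : c (k0 + 1 - 1) = 0 := by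
          rcases mul_eq_zero.mp this with h' | h'
          · exact absurd h' hlam
          · exact h'
        have : k0 + 1 - 1 = k0 := by ring
        rwa [this] at h1
      have hiter : ∀ n : ℕ, μ ^ n * c k0 = lam ^ n * c (k0 - (n : ZMod m)) := by
        intro n
        induction n with
        | zero => simp
        | succ n ih =>
            have hstep' := hcoeff (k0 - (n : ZMod m))
            have harg : k0 - (((n : ℕ) + 1 : ℕ) : ZMod m) = k0 - (n : ZMod m) - 1 := by
              push_cast; ring
            rw [harg, pow_succ, pow_succ]
            calc μ ^ n * μ * c k0 = μ * (μ ^ n * c k0) := by ring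
              _ = μ * (lam ^ n * c (k0 - (n : ZMod m))) := by rw [ih]
              _ = lam ^ n * (μ * c (k0 - (n : ZMod m))) := by ring
              _ = lam ^ n * (lam * c (k0 - (n : ZMod m) - 1)) := by rw [← hstep']
              _ = lam ^ n * lam * c (k0 - (n : ZMod m) - 1) := by ring
      have hmm := hiter m
      rw [ZMod.natCast_self, sub_zero] at hmm
      have hpow : μ ^ m = lam ^ m := mul_right_cancel₀ hk0 hmm
      refine ⟨μ / lam, ?_, ?_⟩
      · rw [div_pow, hpow, div_self (pow_ne_zero m hlam)]
      · rw [div_mul_cancel₀ _ hlam]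
    · rintro ⟨ω, hω, rfl⟩
      have hω0 : ω ≠ 0 := by
        intro h
        rw [h, zero_pow (by omega : m ≠ 0)] at hω
        exact one_ne_zero hω.symm
      set ν : ℂ := ω⁻¹ with hνdef
      have hν0 : ν ≠ 0 := inv_ne_zero hω0
      have hν : ν ^ m = 1 := by rw [hνdef, inv_pow, hω, inv_one]
      have hmod : ∀ a b : ℕ, a % m = b % m → ν ^ a = ν ^ b := by
        intro a b h
        conv_lhs => rw [← Nat.div_add_mod a m]
        conv_rhs => rw [← Nat.div_add_mod b m]
        rw [pow_add, pow_add, pow_mul, pow_mul, hν, one_pow, one_pow, h]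
      set c : ZMod m → ℂ := fun j => ν ^ (j.val) with hcdef
      have hrel : ∀ j, lam * c (j - 1) = (ω * lam) * c j := by
        intro j
        have hval : ((j - 1).val + 1) % m = j.val % m := by
          have h1 : j = (j - 1) + 1 := by ring
          have h2 : j.val = ((j - 1).val + (1 : ZMod m).val) % m := by
            conv_lhs => rw [h1]
            exact ZMod.val_add _ _
          have h2' : j.val = ((j - 1).val + 1 % m) % m := by
            rw [h2, ZMod.val_one_eq_one_mod]
          have hlt : (j - 1).val % m = (j - 1).val := Nat.mod_eq_of_lt (ZMod.val_lt _)
          have hjlt : j.val % m = j.val := Nat.mod_eq_of_lt (ZMod.val_lt _)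
          rw [hjlt, h2', Nat.add_mod ((j - 1).val) 1 m, hlt]
        have hkey : ν ^ ((j - 1).val + 1) = ν ^ j.val := hmod _ _ hval
        have : lam * c (j - 1) * ν = (ω * lam) * c j * ν := by
          rw [hcdef]
          simp only []
          calc lam * ν ^ (j - 1).val * ν = lam * ν ^ ((j - 1).val + 1) := by
                rw [pow_succ]; ring
            _ = lam * ν ^ j.val := by rw [hkey]
            _ = (ω * lam) * ν ^ j.val * ν := by
                rw [hνdef]
                field_simp
        exact mul_right_cancel₀ hν0 this
      set x : V := ⟨∑ j, c j • w j, Submodule.sum_mem _ fun j _ =>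
        Submodule.smul_mem _ _ (Submodule.subset_span ⟨j, rfl⟩)⟩ with hxdef
      have hx0 : x ≠ 0 := by
        intro h
        have hcoe : ∑ j, c j • w j = 0 := by
          have := congrArg (fun y : V => (y : s)) h
          simpa [hxdef] using this
        have := Fintype.linearIndependent_iff.mp hli c hcoe 0
        rw [hcdef] at this
        simp only [ZMod.val_zero, pow_zero] at this
        exact one_ne_zero this
      have hxeig : (A.restrict hV) x = (ω * lam) • x := by
        apply Subtype.ext
        rw [hrestr_coe]
        have hxcoe : (x : s) = ∑ j, c j • w j := rfl
        rw [Submodule.coe_smul, hxcoe, hAsum c, Finset.smul_sum]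
        exact Finset.sum_congr rfl fun j _ => by rw [smul_smul, hrel j]
      exact Module.End.hasEigenvalue_of_hasEigenvector
        ⟨Module.End.mem_eigenspace_iff.mpr hxeig, hx0⟩
  refine ⟨hset, ?_⟩
  rw [hset]
  have himg : {μ : ℂ | ∃ ω : ℂ, ω ^ m = 1 ∧ μ = ω * lam}
      = (fun ω : ℂ => ω * lam) '' {ω : ℂ | ω ^ m = 1} := by
    ext μ
    simp only [Set.mem_setOf_eq, Set.mem_image]
    constructor
    · rintro ⟨ω, h1, h2⟩; exact ⟨ω, h1, h2.symm⟩
    · rintro ⟨ω, h1, h2⟩; exact ⟨ω, h1, h2.symm⟩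
  have hroots : {ω : ℂ | ω ^ m = 1} = ↑(Polynomial.nthRootsFinset m (1 : ℂ)) := by
    ext ω
    rw [Set.mem_setOf_eq, Finset.mem_coe, Polynomial.mem_nthRootsFinset (by omega : 0 < m) (1 : ℂ)]
  have hinj : Function.Injective fun ω : ℂ => ω * lam :=
    fun a b hab => mul_right_cancel₀ hlam hab
  rw [himg, Set.ncard_image_of_injective _ hinj, hroots, Set.ncard_coe_finset]
  exact (Complex.isPrimitiveRoot_exp m (by omega)).card_nthRootsFinset
end

section
/- For every natural number c ≥ 1 there exists a finite-dimensional nilpotent Lie algebra g over ℂ whose nilpotency class is at least c, together with a Lie algebra automorphism α of g satisfying α ∘ α = id and whose fixed-point subspace {x ∈ g : α(x) = x} is one-dimensional. (Consequently, the nilpotency class of a Lie algebra admitting an automorphism of prime order p with m-dimensional fixed-point space cannot be bounded in terms of p and m alone.) -/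
namespace FiliformWitness

noncomputable section

/-- The underlying space of the `(n+1)`-dimensional standard filiform Lie algebra. -/
def G (n : ℕ) : Type := Fin (n + 1) → ℂ

variable {n : ℕ}

instance : AddCommGroup (G n) := inferInstanceAs (AddCommGroup (Fin (n + 1) → ℂ))
instance : Module ℂ (G n) := inferInstanceAs (Module ℂ (Fin (n + 1) → ℂ))

/-- Component of an element. -/
def cmp (x : G n) (k : Fin (n + 1)) : ℂ := x k

/-- Build an element from components. -/
def mk (f : Fin (n + 1) → ℂ) : G n := f

@[simp] lemma cmp_mk (f : Fin (n + 1) → ℂ) (k : Fin (n + 1)) : cmp (mk f : G n) k = f k := rfl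
@[simp] lemma cmp_add (x y : G n) (k : Fin (n + 1)) : cmp (x + y) k = cmp x k + cmp y k := rfl
@[simp] lemma cmp_smul (t : ℂ) (x : G n) (k : Fin (n + 1)) : cmp (t • x) k = t * cmp x k := rfl
@[simp] lemma cmp_zero (k : Fin (n + 1)) : cmp (0 : G n) k = 0 := rfl

lemma ext' {x y : G n} (h : ∀ k, cmp x k = cmp y k) : x = y := funext h

/-- Index shift. -/
def prev (k : Fin (n + 1)) : Fin (n + 1) := ⟨k.1 - 1, lt_of_le_of_lt (Nat.sub_le _ _) k.2⟩

@[simp] lemma prev_zero : prev (0 : Fin (n + 1)) = 0 := rfl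

/-- The filiform bracket. -/
def br (x y : G n) : G n :=
  mk fun k => if 2 ≤ k.1 then cmp x 0 * cmp y (prev k) - cmp y 0 * cmp x (prev k) else 0

lemma cmp_br (x y : G n) (k : Fin (n + 1)) :
    cmp (br x y) k =
      if 2 ≤ k.1 then cmp x 0 * cmp y (prev k) - cmp y 0 * cmp x (prev k) else 0 := rfl

instance : LieRing (G n) :=
  { (inferInstance : AddCommGroup (G n)) with
    bracket := br
    add_lie := fun x y z => show br (x + y) z = br x z + br y z from ext' fun k => by
      simp only [cmp_br, cmp_add]; split_ifs <;> ring
    lie_add := fun x y z => show br x (y + z) = br x y + br x z from ext' fun k => by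
      simp only [cmp_br, cmp_add]; split_ifs <;> ring
    lie_self := fun x => show br x x = 0 from ext' fun k => by
      simp only [cmp_br, cmp_zero]; split_ifs <;> ring
    leibniz_lie := fun x y z =>
      show br x (br y z) = br (br x y) z + br y (br x z) from ext' fun k => by
      simp only [cmp_br, cmp_add, prev_zero]; split_ifs <;> ring }

lemma cmp_bracket (x y : G n) (k : Fin (n + 1)) :
    cmp ⁅x, y⁆ k =
      if 2 ≤ k.1 then cmp x 0 * cmp y (prev k) - cmp y 0 * cmp x (prev k) else 0 := rfl

instance : LieAlgebra ℂ (G n) :=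
  { (inferInstance : Module ℂ (G n)) with
    lie_smul := fun t x y => ext' fun k => by
      simp only [cmp_bracket, cmp_smul]; split_ifs <;> ring }

instance : FiniteDimensional ℂ (G n) :=
  inferInstanceAs (FiniteDimensional ℂ (Fin (n + 1) → ℂ))

/-- Basis vectors. -/
def E (j : Fin (n + 1)) : G n := mk fun k => if k = j then 1 else 0

lemma E_ne_zero (j : Fin (n + 1)) : (E j : G n) ≠ 0 := by
  intro h
  have : cmp (E j : G n) j = 0 := by rw [h, cmp_zero]
  simp [E] at this

lemma lie_E0 (i : ℕ) (h1 : 1 ≤ i) (h2 : i + 1 ≤ n) :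
    ⁅(E 0 : G n), (E ⟨i, by omega⟩ : G n)⁆ = (E ⟨i + 1, by omega⟩ : G n) := by
  apply ext'
  intro k
  simp only [E, cmp_bracket, cmp_mk, prev, Fin.ext_iff, Fin.val_zero]
  split_ifs <;> first | (exfalso; omega) | (rw [if_neg (show ¬(k.1 - 1 = 0) by omega)]; norm_num <;> omega) | norm_num

lemma E_mem_lcs (m : ℕ) (h : m + 1 ≤ n) :
    (E ⟨m + 1, by omega⟩ : G n) ∈ LieModule.lowerCentralSeries ℂ (G n) (G n) m := by
  induction m with
  | zero => exact LieSubmodule.mem_top _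
  | succ m ih =>
    rw [LieModule.lowerCentralSeries_succ]
    rw [← lie_E0 (m + 1) (by omega) (by omega)]
    exact LieSubmodule.lie_mem_lie (LieSubmodule.mem_top _) (ih (by omega))

lemma lcs_bound (m : ℕ) :
    ∀ x ∈ LieModule.lowerCentralSeries ℂ (G n) (G n) (m + 1),
      ∀ k : Fin (n + 1), k.1 ≤ m + 1 → cmp x k = 0 := by
  induction m with
  | zero =>
    intro x hx
    rw [LieModule.lowerCentralSeries_succ, ← LieSubmodule.mem_toSubmodule,
      LieSubmodule.lieIdeal_oper_eq_linear_span'] at hx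
    have hx' := hx
    have hle : Submodule.span ℂ
        {m' | ∃ a ∈ (⊤ : LieIdeal ℂ (G n)), ∃ b ∈ LieModule.lowerCentralSeries ℂ (G n) (G n) 0,
          ⁅a, b⁆ = m'} ≤
        { carrier := {x : G n | ∀ k : Fin (n + 1), k.1 ≤ 1 → cmp x k = 0}
          add_mem' := fun ha hb k hk => by
            rw [cmp_add, ha k hk, hb k hk, add_zero]
          zero_mem' := fun k _ => cmp_zero k
          smul_mem' := fun t x hx k hk => by rw [cmp_smul, hx k hk, mul_zero] } := by
      rw [Submodule.span_le]
      rintro _ ⟨a, -, b, hb, rfl⟩ k hk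
      rw [cmp_bracket, if_neg (by omega)]
    exact fun k hk => hle hx' k hk
  | succ m ih =>
    intro x hx
    rw [LieModule.lowerCentralSeries_succ, ← LieSubmodule.mem_toSubmodule,
      LieSubmodule.lieIdeal_oper_eq_linear_span'] at hx
    have hx' := hx
    have hle : Submodule.span ℂ
        {m' | ∃ a ∈ (⊤ : LieIdeal ℂ (G n)),
          ∃ b ∈ LieModule.lowerCentralSeries ℂ (G n) (G n) (m + 1), ⁅a, b⁆ = m'} ≤
        { carrier := {x : G n | ∀ k : Fin (n + 1), k.1 ≤ m + 2 → cmp x k = 0}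
          add_mem' := fun ha hb k hk => by
            rw [cmp_add, ha k hk, hb k hk, add_zero]
          zero_mem' := fun k _ => cmp_zero k
          smul_mem' := fun t x hx k hk => by rw [cmp_smul, hx k hk, mul_zero] } := by
      rw [Submodule.span_le]
      rintro _ ⟨a, -, b, hb, rfl⟩ k hk
      rw [cmp_bracket]
      split_ifs with h2
      · rw [ih b hb 0 (by simp), ih b hb (prev k) (by simp [prev]; omega)]
        ring
      · rfl
    exact fun k hk => hle hx' k hk

lemma lcs_eq_bot : LieModule.lowerCentralSeries ℂ (G n) (G n) (n + 1) = ⊥ := by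
  rw [LieSubmodule.eq_bot_iff]
  intro x hx
  exact ext' fun k => by
    rw [cmp_zero]
    exact lcs_bound n x hx k (by omega)

instance : LieRing.IsNilpotent (G n) := LieModule.IsNilpotent.mk (M := G n) lcs_eq_bot

/-- The involution as a linear map. -/
def amap : G n →ₗ[ℂ] G n where
  toFun x := mk fun k => if k.1 = 0 then cmp x k else -cmp x k
  map_add' x y := ext' fun k => by
    simp only [cmp_mk, cmp_add]; split_ifs <;> ring
  map_smul' t x := ext' fun k => by
    simp only [cmp_mk, cmp_smul, RingHom.id_apply]; split_ifs <;> ring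

lemma cmp_amap (x : G n) (k : Fin (n + 1)) :
    cmp (amap x) k = if k.1 = 0 then cmp x k else -cmp x k := rfl

lemma amap_invol (x : G n) : amap (amap x) = x := ext' fun k => by
  simp only [cmp_amap]; split_ifs <;> ring

lemma amap_lie (x y : G n) : amap ⁅x, y⁆ = ⁅amap x, amap y⁆ := by
  apply ext'
  intro k
  simp only [cmp_amap, cmp_bracket, prev, Fin.val_zero, if_pos rfl]
  split_ifs <;> first | ring1 | (exfalso; omega)

/-- The involution as a Lie algebra automorphism. -/
def aut : G n ≃ₗ⁅ℂ⁆ G n :=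
  { toLieHom := { amap with map_lie' := fun {x y} => amap_lie x y }
    invFun := amap
    left_inv := amap_invol
    right_inv := amap_invol }

lemma aut_apply (x : G n) : (aut : G n ≃ₗ⁅ℂ⁆ G n) x = amap x := rfl

lemma aut_toLinear_apply (x : G n) :
    ((aut : G n ≃ₗ⁅ℂ⁆ G n).toLinearEquiv : G n →ₗ[ℂ] G n) x = amap x := rfl

lemma eigen_eq :
    Module.End.eigenspace ((aut : G n ≃ₗ⁅ℂ⁆ G n).toLinearEquiv : G n →ₗ[ℂ] G n) 1 =
      Submodule.span ℂ {(E 0 : G n)} := by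
  ext x
  rw [Module.End.mem_eigenspace_iff, one_smul, Submodule.mem_span_singleton]
  constructor
  · intro h
    rw [aut_toLinear_apply] at h
    refine ⟨cmp x 0, ?_⟩
    apply ext'
    intro k
    have hk : cmp (amap x) k = cmp x k := by rw [h]
    rw [cmp_amap] at hk
    simp only [cmp_smul, E, cmp_mk]
    by_cases h0 : k = (0 : Fin (n + 1))
    · subst h0; simp
    · have h0' : k.1 ≠ 0 := by
        exact fun h => h0 (Fin.ext (by simp [h]))
      rw [if_neg h0]
      rw [if_neg h0'] at hk
      have h2 : (2 : ℂ) * cmp x k = 0 := by linear_combination -hk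
      have := mul_eq_zero.mp h2
      simp only [OfNat.ofNat_ne_zero, false_or] at this
      rw [this, mul_zero]
  · rintro ⟨t, rfl⟩
    rw [aut_toLinear_apply]
    apply ext'
    intro k
    simp only [cmp_amap, cmp_smul, E, cmp_mk]
    by_cases h0 : k = (0 : Fin (n + 1))
    · subst h0; simp
    · have h0' : k.1 ≠ 0 := fun h => h0 (Fin.ext (by simp [h]))
      rw [if_neg h0', if_neg h0]
      ring

end

end FiliformWitness

/-- For every natural number `c ≥ 1` there exists a finite-dimensional nilpotent Lie algebra
`g` over `ℂ` whose nilpotency class is at least `c` (i.e. the `(c-1)`-st term of the lower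
central series is nonzero), together with a Lie algebra automorphism `α` of `g` with
`α ∘ α = id` whose fixed-point subspace is one-dimensional. -/
theorem exists_nilpotent_with_involution_small_fix (c : ℕ) (hc : 1 ≤ c) :
    ∃ (g : Type) (_ : LieRing g) (_ : LieAlgebra ℂ g),
      FiniteDimensional ℂ g ∧ LieRing.IsNilpotent g ∧
      LieModule.lowerCentralSeries ℂ g g (c - 1) ≠ ⊥ ∧
      ∃ α : g ≃ₗ⁅ℂ⁆ g, (∀ x, α (α x) = x) ∧
        Module.finrank ℂ
          ↥(Module.End.eigenspace (α.toLinearEquiv : g →ₗ[ℂ] g) 1) = 1 := by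
  refine ⟨FiliformWitness.G c, inferInstance, inferInstance, inferInstance, inferInstance,
    ?_, FiliformWitness.aut, fun x => FiliformWitness.amap_invol x, ?_⟩
  · intro hbot
    have hmem := FiliformWitness.E_mem_lcs (n := c) (c - 1) (by omega)
    rw [hbot] at hmem
    exact FiliformWitness.E_ne_zero _ ((LieSubmodule.mem_bot _).mp hmem)
  · rw [FiliformWitness.eigen_eq]
    exact finrank_span_singleton (FiliformWitness.E_ne_zero 0)
end
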